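/- Let Ω be a p×p real symmetric positive definite matrix with all diagonal entries equal to 1 such that: every 3×3 principal submatrix of Ω has smallest eigenvalue at least 2(5 − 2√6); every 4×4 principal submatrix of Ω has smallest eigenvalue at least 5 − 2√6; and |Ω(i,j)| ≤ 8√6 − 19 for all i ≠ j. Let ϑ > 0 and r satisfy ϑ < r < (5 + 2√6)ϑ. Then for every pair of disjoint subsets D, F of {1,…,p} with D nonempty, ρ(D, F; Ω) ≥ (ϑ + r)²/(4r). -/

import Mathlib

open Matrix

/-- `ω(D,F;Ω)`: the minimum (infimum) of
`ξᵀ(Ω_{D,D} − Ω_{D,F}(Ω_{F,F})⁻¹Ω_{F,D})ξ` over vectors `ξ ∈ ℝ^D` with `|ξ_i| ≥ 1`. -/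
noncomputable def omegaDF {p : ℕ} (Ω : Matrix (Fin p) (Fin p) ℝ)
    (D F : Finset (Fin p)) : ℝ :=
  sInf {q : ℝ | ∃ ξ : ↥D → ℝ, (∀ i, 1 ≤ |ξ i|) ∧
    q = ξ ⬝ᵥ ((Ω.submatrix (fun i : ↥D => (i : Fin p)) (fun j : ↥D => (j : Fin p))
        - Ω.submatrix (fun i : ↥D => (i : Fin p)) (fun j : ↥F => (j : Fin p))
          * (Ω.submatrix (fun i : ↥F => (i : Fin p)) (fun j : ↥F => (j : Fin p)))⁻¹
          * Ω.submatrix (fun i : ↥F => (i : Fin p)) (fun j : ↥D => (j : Fin p))) *ᵥ ξ)}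

/-- `ρ(D,F;Ω)` with parameters `ϑ, r`. -/
noncomputable def rhoDF {p : ℕ} (Ω : Matrix (Fin p) (Fin p) ℝ) (ϑ r : ℝ)
    (D F : Finset (Fin p)) : ℝ :=
  if Even D.card then
    ((D.card : ℝ) + 2 * F.card) * ϑ / 2 + omegaDF Ω D F * r / 4
  else
    ((D.card : ℝ) + 2 * F.card) * ϑ / 2 + ϑ / 2 +
      (max (Real.sqrt (omegaDF Ω D F * r) - ϑ / Real.sqrt (omegaDF Ω D F * r)) 0) ^ 2 / 4

/-- `λ_k*(Ω)`: the minimum over all `k×k` principal submatrices of `Ω` of the smallest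
eigenvalue, characterized as the minimal Rayleigh quotient over unit vectors. -/
noncomputable def lambdaStar {p : ℕ} (Ω : Matrix (Fin p) (Fin p) ℝ) (k : ℕ) : ℝ :=
  sInf {lam : ℝ | ∃ S : Finset (Fin p), S.card = k ∧ ∃ ξ : ↥S → ℝ,
    (∑ i, ξ i ^ 2) = 1 ∧
    lam = ξ ⬝ᵥ (Ω.submatrix (fun i : ↥S => (i : Fin p)) (fun j : ↥S => (j : Fin p)) *ᵥ ξ)}

namespace RhoProof
variable {p : ℕ}

noncomputable def ext (S : Finset (Fin p)) (x : ↥S → ℝ) : Fin p → ℝ :=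
  fun i => if h : i ∈ S then x ⟨i, h⟩ else 0

lemma ext_coe (S : Finset (Fin p)) (x : ↥S → ℝ) (i : ↥S) : ext S x (i : Fin p) = x i := by
  simp [ext]

lemma ext_of_not_mem (S : Finset (Fin p)) (x : ↥S → ℝ) {i : Fin p} (h : i ∉ S) :
    ext S x i = 0 := dif_neg h

lemma dot_restrict (Ω : Matrix (Fin p) (Fin p) ℝ) (S T : Finset (Fin p))
    (w u : Fin p → ℝ) (hw : ∀ i ∉ S, w i = 0) (hu : ∀ j ∉ T, u j = 0) :
    w ⬝ᵥ (Ω *ᵥ u) =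
      (fun i : ↥S => w i) ⬝ᵥ
        ((Ω.submatrix (fun i : ↥S => (i : Fin p)) (fun j : ↥T => (j : Fin p))) *ᵥ
          (fun j : ↥T => u j)) := by
  simp only [dotProduct, mulVec, submatrix_apply]
  calc ∑ i : Fin p, w i * ∑ j : Fin p, Ω i j * u j
      = ∑ i : Fin p, w i * ∑ j : ↥T, Ω i (j : Fin p) * u (j : Fin p) := by
        refine Finset.sum_congr rfl fun i _ => ?_
        congr 1
        rw [Finset.sum_coe_sort T (fun j => Ω i j * u j)]
        exact (Finset.sum_subset (Finset.subset_univ T)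
          (fun j _ hj => by rw [hu j hj, mul_zero])).symm
    _ = ∑ i ∈ S, w i * ∑ j : ↥T, Ω i (j : Fin p) * u (j : Fin p) := by
        exact (Finset.sum_subset (Finset.subset_univ S)
          (fun i _ hi => by rw [hw i hi, zero_mul])).symm
    _ = ∑ i : ↥S, w (i : Fin p) * ∑ j : ↥T, Ω (i : Fin p) (j : Fin p) * u (j : Fin p) :=
        (Finset.sum_coe_sort S _).symm

lemma quad_eq_sum (Ω : Matrix (Fin p) (Fin p) ℝ) (S : Finset (Fin p))
    (w : Fin p → ℝ) (hw : ∀ i ∉ S, w i = 0) :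
    w ⬝ᵥ (Ω *ᵥ w) = ∑ i ∈ S, ∑ j ∈ S, w i * (Ω i j * w j) := by
  simp only [dotProduct, mulVec]
  calc ∑ i : Fin p, w i * ∑ j : Fin p, Ω i j * w j
      = ∑ i : Fin p, ∑ j : Fin p, w i * (Ω i j * w j) := by
        simp [Finset.mul_sum]
    _ = ∑ i ∈ S, ∑ j : Fin p, w i * (Ω i j * w j) := by
        exact (Finset.sum_subset (Finset.subset_univ S)
          (fun i _ hi => by simp [hw i hi])).symm
    _ = ∑ i ∈ S, ∑ j ∈ S, w i * (Ω i j * w j) := by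
        refine Finset.sum_congr rfl fun i _ => ?_
        exact (Finset.sum_subset (Finset.subset_univ S)
          (fun j _ hj => by simp [hw j hj])).symm

lemma posDef_sub (Ω : Matrix (Fin p) (Fin p) ℝ) (hpd : Ω.PosDef) (S : Finset (Fin p)) :
    (Ω.submatrix (fun i : ↥S => (i : Fin p)) (fun j : ↥S => (j : Fin p))).PosDef := by
  refine PosDef.of_dotProduct_mulVec_pos ?_ ?_
  · ext i j
    simp only [conjTranspose_apply, submatrix_apply, star_trivial]
    exact hpd.1.apply _ _
  · intro x hx
    have hx0 : ext S x ≠ 0 := by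
      intro h
      apply hx
      funext i
      have := congrFun h i
      rwa [ext_coe] at this
    have hq := hpd.dotProduct_mulVec_pos hx0
    simp only [star_trivial] at hq ⊢
    have hrw := dot_restrict Ω S S (ext S x) (ext S x)
      (fun i hi => ext_of_not_mem S x hi) (fun i hi => ext_of_not_mem S x hi)
    have hfun : (fun i : ↥S => ext S x (i : Fin p)) = x := funext fun i => ext_coe S x i
    rw [hfun] at hrw
    rw [← hrw]
    exact hq

section Schur
variable (Ω : Matrix (Fin p) (Fin p) ℝ) (D F : Finset (Fin p)) (ξ : ↥D → ℝ)

noncomputable def etaOf : ↥F → ℝ :=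
  -(((Ω.submatrix (fun i : ↥F => (i : Fin p)) (fun j : ↥F => (j : Fin p)))⁻¹
      * Ω.submatrix (fun i : ↥F => (i : Fin p)) (fun j : ↥D => (j : Fin p))) *ᵥ ξ)

noncomputable def wOf : Fin p → ℝ := ext D ξ + ext F (etaOf Ω D F ξ)

lemma wOf_not_mem {i : Fin p} (hiD : i ∉ D) (hiF : i ∉ F) : wOf Ω D F ξ i = 0 := by
  simp [wOf, ext_of_not_mem D ξ hiD, ext_of_not_mem F _ hiF]

lemma wOf_mem_D (hDF : Disjoint D F) {i : Fin p} (h : i ∈ D) :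
    wOf Ω D F ξ i = ξ ⟨i, h⟩ := by
  have hiF : i ∉ F := fun hF => (Finset.disjoint_left.mp hDF h hF)
  simp [wOf, ext, h, hiF]

lemma schur_quad_eq (hpd : Ω.PosDef) :
    ξ ⬝ᵥ ((Ω.submatrix (fun i : ↥D => (i : Fin p)) (fun j : ↥D => (j : Fin p))
        - Ω.submatrix (fun i : ↥D => (i : Fin p)) (fun j : ↥F => (j : Fin p))
          * (Ω.submatrix (fun i : ↥F => (i : Fin p)) (fun j : ↥F => (j : Fin p)))⁻¹
          * Ω.submatrix (fun i : ↥F => (i : Fin p)) (fun j : ↥D => (j : Fin p))) *ᵥ ξ)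
      = wOf Ω D F ξ ⬝ᵥ (Ω *ᵥ wOf Ω D F ξ) := by
  set A := Ω.submatrix (fun i : ↥D => (i : Fin p)) (fun j : ↥D => (j : Fin p)) with hA
  set B := Ω.submatrix (fun i : ↥D => (i : Fin p)) (fun j : ↥F => (j : Fin p)) with hB
  set C := Ω.submatrix (fun i : ↥F => (i : Fin p)) (fun j : ↥D => (j : Fin p)) with hC
  set N := Ω.submatrix (fun i : ↥F => (i : Fin p)) (fun j : ↥F => (j : Fin p)) with hN
  have hNdet : IsUnit N.det := isUnit_iff_ne_zero.mpr (ne_of_gt (posDef_sub Ω hpd F).det_pos)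
  have hN1 : N * N⁻¹ = 1 := mul_nonsing_inv N hNdet
  set η := etaOf Ω D F ξ with hη
  have hext : ∀ (S : Finset (Fin p)) (x : ↥S → ℝ), (fun i : ↥S => ext S x (i : Fin p)) = x :=
    fun S x => funext fun i => ext_coe S x i
  have e1 : ext D ξ ⬝ᵥ (Ω *ᵥ ext D ξ) = ξ ⬝ᵥ (A *ᵥ ξ) := by
    rw [dot_restrict Ω D D _ _ (fun i hi => ext_of_not_mem D ξ hi)
        (fun i hi => ext_of_not_mem D ξ hi), hext]
  have e2 : ext D ξ ⬝ᵥ (Ω *ᵥ ext F η) = ξ ⬝ᵥ (B *ᵥ η) := by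
    rw [dot_restrict Ω D F _ _ (fun i hi => ext_of_not_mem D ξ hi)
        (fun i hi => ext_of_not_mem F η hi), hext, hext]
  have e3 : ext F η ⬝ᵥ (Ω *ᵥ ext D ξ) = η ⬝ᵥ (C *ᵥ ξ) := by
    rw [dot_restrict Ω F D _ _ (fun i hi => ext_of_not_mem F η hi)
        (fun i hi => ext_of_not_mem D ξ hi), hext, hext]
  have e4 : ext F η ⬝ᵥ (Ω *ᵥ ext F η) = η ⬝ᵥ (N *ᵥ η) := by
    rw [dot_restrict Ω F F _ _ (fun i hi => ext_of_not_mem F η hi)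
        (fun i hi => ext_of_not_mem F η hi), hext, ← hN]
  have expand : wOf Ω D F ξ ⬝ᵥ (Ω *ᵥ wOf Ω D F ξ)
      = ξ ⬝ᵥ (A *ᵥ ξ) + ξ ⬝ᵥ (B *ᵥ η) + (η ⬝ᵥ (C *ᵥ ξ) + η ⬝ᵥ (N *ᵥ η)) := by
    rw [wOf, mulVec_add, dotProduct_add, add_dotProduct, add_dotProduct, e1, e2, e3, e4]
    ring
  have hNη : N *ᵥ η = -(C *ᵥ ξ) := by
    rw [hη, etaOf, mulVec_neg, mulVec_mulVec, ← hN, ← hC, ← Matrix.mul_assoc, hN1,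
      Matrix.one_mul]
  have cancel : η ⬝ᵥ (C *ᵥ ξ) + η ⬝ᵥ (N *ᵥ η) = 0 := by
    rw [hNη, dotProduct_neg]; ring
  have e2' : ξ ⬝ᵥ (B *ᵥ η) = -(ξ ⬝ᵥ ((B * N⁻¹ * C) *ᵥ ξ)) := by
    rw [hη, etaOf, mulVec_neg, mulVec_mulVec, dotProduct_neg, ← hN, ← hC, ← Matrix.mul_assoc]
  rw [expand, cancel, e2', sub_mulVec, dotProduct_sub]
  ring
end Schur

lemma omega_lb (Ω : Matrix (Fin p) (Fin p) ℝ) (hpd : Ω.PosDef) (D F : Finset (Fin p)) (c : ℝ)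
    (h : ∀ ξ : ↥D → ℝ, (∀ i, 1 ≤ |ξ i|) →
      c ≤ wOf Ω D F ξ ⬝ᵥ (Ω *ᵥ wOf Ω D F ξ)) :
    c ≤ omegaDF Ω D F := by
  apply le_csInf
  · exact ⟨_, ⟨fun _ => 1, fun i => by norm_num, rfl⟩⟩
  · rintro q ⟨ξ, hξ, rfl⟩
    rw [schur_quad_eq Ω D F ξ hpd]
    exact h ξ hξ

lemma omega_nonneg (Ω : Matrix (Fin p) (Fin p) ℝ) (hpd : Ω.PosDef) (D F : Finset (Fin p)) :
    0 ≤ omegaDF Ω D F := by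
  apply omega_lb Ω hpd
  intro ξ _
  have := hpd.posSemidef.dotProduct_mulVec_nonneg (wOf Ω D F ξ)
  simpa using this

lemma lambdaStar_bdd (Ω : Matrix (Fin p) (Fin p) ℝ) (hpd : Ω.PosDef) (k : ℕ) :
    BddBelow {lam : ℝ | ∃ S : Finset (Fin p), S.card = k ∧ ∃ ξ : ↥S → ℝ,
      (∑ i, ξ i ^ 2) = 1 ∧
      lam = ξ ⬝ᵥ (Ω.submatrix (fun i : ↥S => (i : Fin p)) (fun j : ↥S => (j : Fin p)) *ᵥ ξ)} := by
  refine ⟨0, ?_⟩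
  rintro lam ⟨S, hS, ξ, hsum, rfl⟩
  have := (posDef_sub Ω hpd S).posSemidef.dotProduct_mulVec_nonneg ξ
  simpa using this

lemma rayleigh (Ω : Matrix (Fin p) (Fin p) ℝ) (hpd : Ω.PosDef) (S : Finset (Fin p)) (k : ℕ)
    (hS : S.card = k) (v : ↥S → ℝ) :
    lambdaStar Ω k * (∑ i, v i ^ 2) ≤
      v ⬝ᵥ (Ω.submatrix (fun i : ↥S => (i : Fin p)) (fun j : ↥S => (j : Fin p)) *ᵥ v) := by
  have hn0 : 0 ≤ ∑ i, v i ^ 2 := Finset.sum_nonneg fun i _ => sq_nonneg _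
  rcases eq_or_lt_of_le hn0 with hn | hn
  · rw [← hn, mul_zero]
    have := (posDef_sub Ω hpd S).posSemidef.dotProduct_mulVec_nonneg v
    simpa using this
  · set n := ∑ i, v i ^ 2 with hndef
    set cc := (Real.sqrt n)⁻¹ with hcc
    have hsnp : 0 < Real.sqrt n := Real.sqrt_pos.2 hn
    have hsn : Real.sqrt n ^ 2 = n := Real.sq_sqrt hn.le
    have hcc2 : cc ^ 2 * n = 1 := by
      rw [hcc, inv_pow, hsn]
      field_simp
    have hsum1 : (∑ i, (cc • v) i ^ 2) = 1 := by
      simp only [Pi.smul_apply, smul_eq_mul, mul_pow, ← Finset.mul_sum]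
      exact hcc2
    have hle : lambdaStar Ω k ≤ (cc • v) ⬝ᵥ
        (Ω.submatrix (fun i : ↥S => (i : Fin p)) (fun j : ↥S => (j : Fin p)) *ᵥ (cc • v)) :=
      csInf_le (lambdaStar_bdd Ω hpd k) ⟨S, hS, cc • v, hsum1, rfl⟩
    have hquad : (cc • v) ⬝ᵥ
        (Ω.submatrix (fun i : ↥S => (i : Fin p)) (fun j : ↥S => (j : Fin p)) *ᵥ (cc • v))
        = cc ^ 2 * (v ⬝ᵥ (Ω.submatrix (fun i : ↥S => (i : Fin p)) (fun j : ↥S => (j : Fin p)) *ᵥ v)) := by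
      rw [Matrix.mulVec_smul, smul_dotProduct, dotProduct_smul, smul_eq_mul, smul_eq_mul]
      ring
    rw [hquad] at hle
    have h2 := mul_le_mul_of_nonneg_right hle hn0
    calc lambdaStar Ω k * n ≤ cc ^ 2 *
        (v ⬝ᵥ (Ω.submatrix (fun i : ↥S => (i : Fin p)) (fun j : ↥S => (j : Fin p)) *ᵥ v)) * n := h2
      _ = (v ⬝ᵥ (Ω.submatrix (fun i : ↥S => (i : Fin p)) (fun j : ↥S => (j : Fin p)) *ᵥ v))
          * (cc ^ 2 * n) := by ring
      _ = _ := by rw [hcc2, mul_one]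

lemma omega_ge_lambda (Ω : Matrix (Fin p) (Fin p) ℝ) (hpd : Ω.PosDef)
    (D F : Finset (Fin p)) (hDF : Disjoint D F) (k : ℕ) (hk : (D ∪ F).card = k)
    (hl0 : 0 ≤ lambdaStar Ω k) :
    lambdaStar Ω k * D.card ≤ omegaDF Ω D F := by
  apply omega_lb Ω hpd
  intro ξ hξ
  set w := wOf Ω D F ξ with hw
  have hsupp : ∀ i ∉ D ∪ F, w i = 0 := by
    intro i hi
    rw [Finset.mem_union] at hi
    push_neg at hi
    exact wOf_not_mem Ω D F ξ hi.1 hi.2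
  rw [dot_restrict Ω (D ∪ F) (D ∪ F) w w hsupp hsupp]
  refine le_trans ?_ (rayleigh Ω hpd (D ∪ F) k hk (fun i => w i))
  apply mul_le_mul_of_nonneg_left ?_ hl0
  calc (D.card : ℝ) = ∑ _i ∈ D, (1 : ℝ) := by simp
    _ ≤ ∑ i ∈ D, w i ^ 2 := by
        refine Finset.sum_le_sum fun i hi => ?_
        rw [hw, wOf_mem_D Ω D F ξ hDF hi]
        have h1 := hξ ⟨i, hi⟩
        nlinarith [sq_abs (ξ ⟨i, hi⟩), abs_nonneg (ξ ⟨i, hi⟩)]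
    _ ≤ ∑ i ∈ D ∪ F, w i ^ 2 :=
        Finset.sum_le_sum_of_subset_of_nonneg Finset.subset_union_left
          (fun i _ _ => sq_nonneg _)
    _ = ∑ i : ↥(D ∪ F), w (i : Fin p) ^ 2 := (Finset.sum_coe_sort _ _).symm

lemma max_sqrt_sq_ge (ϑ r ω c : ℝ) (h0 : 0 < ϑ) (hr : 0 < r) (hc : 0 < c)
    (hω : c ≤ ω) (hϑ : ϑ ≤ c * r) :
    c * r - 2 * ϑ + ϑ ^ 2 / (c * r) ≤
      (max (Real.sqrt (ω * r) - ϑ / Real.sqrt (ω * r)) 0) ^ 2 := by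
  have hcr : 0 < c * r := mul_pos hc hr
  have hωr : 0 < ω * r := lt_of_lt_of_le hcr (by nlinarith)
  set u := Real.sqrt (ω * r) with hu
  have hu0 : 0 < u := Real.sqrt_pos.mpr hωr
  have hu2 : u ^ 2 = ω * r := Real.sq_sqrt hωr.le
  have hcru : c * r ≤ u ^ 2 := by nlinarith
  have hM0 : 0 ≤ u - ϑ / u := by
    rw [sub_nonneg, div_le_iff₀ hu0]
    nlinarith
  rw [max_eq_left hM0]
  have hexp : (u - ϑ / u) ^ 2 = u ^ 2 - 2 * ϑ + ϑ ^ 2 / u ^ 2 := by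
    field_simp
    ring
  rw [hexp]
  have h1 : ϑ ^ 2 ≤ u ^ 2 * (c * r) := by nlinarith
  have h2 : ϑ ^ 2 / (c * r) - ϑ ^ 2 / u ^ 2 ≤ u ^ 2 - c * r := by
    rw [div_sub_div _ _ (ne_of_gt hcr) (ne_of_gt (by positivity : (0:ℝ) < u ^ 2))]
    rw [div_le_iff₀ (by positivity)]
    nlinarith
  linarith


lemma twelve (s ϑ r : ℝ) (hs : s^2 = 6) (hs0 : 0 ≤ s) (hsl : 2.4494 < s)
    (h0 : 0 < ϑ) (h1 : ϑ < r) (h2 : r < (5 + 2*s)*ϑ) :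
    (ϑ + r)^2 ≤ 12*ϑ*r := by
  have f1 : 0 < (5 + 2*s)*ϑ - r := by linarith
  have f2 : 0 < r - (5 - 2*s)*ϑ := by
    nlinarith [mul_lt_mul_of_pos_right (show 5 - 2*s < 1 by linarith) h0]
  have hss : s^2*ϑ^2 = 6*ϑ^2 := by rw [hs]
  nlinarith [mul_pos f1 f2, hss]

lemma even2 (s ϑ r : ℝ) (hs : s^2 = 6) (hs0 : 0 ≤ s) (hsl : 2.4494 < s)
    (h0 : 0 < ϑ) (h1 : ϑ < r) (hϑr : (5 - 2*s)*r < ϑ) :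
    (ϑ + r)^2 ≤ 4*ϑ*r + (40 - 16*s)*r^2 := by
  have hr : 0 < r := h0.trans h1
  have f1 : 0 < (2*s - 3)*r - ϑ := by
    nlinarith [mul_lt_mul_of_pos_right hsl hr]
  have f2 : 0 < ϑ - (5 - 2*s)*r := by linarith
  have hss : s^2*r^2 = 6*r^2 := by rw [hs]
  nlinarith [mul_pos f1 f2, hss]

lemma even4 (s ϑ r : ℝ) (hs : s^2 = 6) (hs0 : 0 ≤ s) (hsl : 2.4494 < s)
    (h0 : 0 < ϑ) (h1 : ϑ < r) (hϑr : (5 - 2*s)*r < ϑ) :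
    (ϑ + r)^2 ≤ 8*ϑ*r + (20 - 8*s)*r^2 := by
  have hr : 0 < r := h0.trans h1
  have f1 : 0 < (1 + 2*s)*r - ϑ := by nlinarith [mul_nonneg hs0 hr.le]
  have f2 : 0 < ϑ - (5 - 2*s)*r := by linarith
  have hss : s^2*r^2 = 6*r^2 := by rw [hs]
  nlinarith [mul_pos f1 f2, hss]

lemma theta_small (ϑ r : ℝ) (h0 : 0 < ϑ) (h1 : ϑ < r) (hbig : 8*ϑ*r < (ϑ+r)^2) :
    5*ϑ < r := by
  nlinarith [mul_pos h0 (sub_pos.2 h1), mul_pos (h0.trans h1) (h0.trans h1)]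

lemma odd_m1 (ϑ r M : ℝ) (h0 : 0 < ϑ) (hr : 0 < r)
    (hMlb : 1*r - 2*ϑ + ϑ^2/(1*r) ≤ M^2) : (ϑ+r)^2 ≤ 4*ϑ*r + M^2*r := by
  have hfld : ϑ^2/(1*r)*r = ϑ^2 := by field_simp
  have hMr := mul_le_mul_of_nonneg_right hMlb hr.le
  nlinarith [hMr, hfld]

lemma odd_m3 (s ϑ r c M : ℝ) (hs : s^2 = 6) (hs0 : 0 ≤ s) (hsl : 2.4494 < s)
    (hsu : s < 2.4495) (h0 : 0 < ϑ) (h1 : ϑ < r)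
    (hϑr : (5 - 2*s)*r < ϑ) (hc1 : 8*s - 19 ≤ c) (hc2 : c ≤ 1)
    (hMlb : c*r - 2*ϑ + ϑ^2/(c*r) ≤ M^2) :
    (ϑ+r)^2 ≤ 8*ϑ*r + M^2*r := by
  have hr : 0 < r := h0.trans h1
  have hc0 : 0 < c := by nlinarith
  have hMr := mul_le_mul_of_nonneg_right hMlb hr.le
  set Y := ϑ^2/(c*r)*r with hYdef
  have hYc : c * Y = ϑ^2 := by
    rw [hYdef]
    field_simp
  have hY : 0 ≤ 4*c*ϑ*r + c^2*r^2 - c*r^2 + (1-c)*ϑ^2 := by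
    nlinarith [mul_lt_mul_of_pos_left hϑr (mul_pos hc0 hr),
      mul_le_mul_of_nonneg_right hc1 (mul_pos hc0 (mul_pos hr hr)).le,
      mul_nonneg (show (0:ℝ) ≤ 1 - c by linarith) (sq_nonneg ϑ)]
  have h5 : c * ((ϑ+r)^2) ≤ c * (6*ϑ*r + c*r^2 + Y) := by nlinarith [hY, hYc]
  have h4 : (ϑ+r)^2 ≤ 6*ϑ*r + c*r^2 + Y := le_of_mul_le_mul_left h5 hc0
  nlinarith [hMr, h4]


end RhoProof

set_option maxHeartbeats 1000000 in
/-- Let `Ω` be a `p×p` real symmetric positive definite matrix with unit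
diagonal such that every 3×3 principal submatrix has smallest eigenvalue `≥ 2(5 − 2√6)`,
every 4×4 principal submatrix has smallest eigenvalue `≥ 5 − 2√6`, and
`|Ω(i,j)| ≤ 8√6 − 19` for `i ≠ j`. Let `0 < ϑ` and `ϑ < r < (5 + 2√6)ϑ`. Then for every
pair of disjoint subsets `D, F` with `D` nonempty, `ρ(D,F;Ω) ≥ (ϑ + r)²/(4r)`. -/
theorem rho_lower_bound_cor_entrywise2
    (p : ℕ) (Ω : Matrix (Fin p) (Fin p) ℝ) (hsymm : Ω.IsSymm) (hpd : Ω.PosDef)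
    (hdiag : ∀ i, Ω i i = 1)
    (hlam3 : 2 * (5 - 2 * Real.sqrt 6) ≤ lambdaStar Ω 3)
    (hlam4 : 5 - 2 * Real.sqrt 6 ≤ lambdaStar Ω 4)
    (hoff : ∀ i j, i ≠ j → |Ω i j| ≤ 8 * Real.sqrt 6 - 19)
    (ϑ r : ℝ) (h0 : 0 < ϑ) (h1 : ϑ < r) (h2 : r < (5 + 2 * Real.sqrt 6) * ϑ)
    (D F : Finset (Fin p)) (hD : D.Nonempty) (hDF : Disjoint D F) :
    (ϑ + r) ^ 2 / (4 * r) ≤ rhoDF Ω ϑ r D F := by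
  classical
  have hs0 : (0:ℝ) ≤ Real.sqrt 6 := Real.sqrt_nonneg 6
  have hs : Real.sqrt 6 ^ 2 = 6 := Real.sq_sqrt (by norm_num)
  set s := Real.sqrt 6 with hsdef
  have hsl : 2.4494 < s := by nlinarith
  have hsu : s < 2.4495 := by nlinarith
  have hr : 0 < r := h0.trans h1
  have h5s : (0:ℝ) < 5 - 2 * s := by nlinarith
  have hϑr : (5 - 2 * s) * r < ϑ := by
    have hssϑ : s^2*ϑ = 6*ϑ := by rw [hs]
    have := mul_lt_mul_of_pos_left h2 h5s
    nlinarith [this, hssϑ]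
  have hω0 : 0 ≤ omegaDF Ω D F := RhoProof.omega_nonneg Ω hpd D F
  have hlam30 : (0:ℝ) ≤ lambdaStar Ω 3 := le_trans (by nlinarith) hlam3
  have hlam40 : (0:ℝ) ≤ lambdaStar Ω 4 := le_trans (by nlinarith) hlam4
  have hdd : 1 ≤ D.card := Finset.card_pos.mpr hD
  have hsq1 : ∀ (ξ : ↥D → ℝ), (∀ i, 1 ≤ |ξ i|) → ∀ i (hi : i ∈ D),
      1 ≤ RhoProof.wOf Ω D F ξ i ^ 2 := by
    intro ξ hξ i hi
    rw [RhoProof.wOf_mem_D Ω D F ξ hDF hi]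
    have h1 := hξ ⟨i, hi⟩
    nlinarith [sq_abs (ξ ⟨i, hi⟩), abs_nonneg (ξ ⟨i, hi⟩)]
  have htwelve : (ϑ + r)^2 ≤ 12*ϑ*r := RhoProof.twelve s ϑ r hs hs0 hsl h0 h1 h2
  unfold rhoDF
  by_cases hev : Even D.card
  · rw [if_pos hev]
    rw [div_le_iff₀ (by positivity : (0:ℝ) < 4 * r)]
    by_cases h6 : 6 ≤ D.card + 2 * F.card
    · have hm : (6:ℝ) ≤ (D.card : ℝ) + 2 * F.card := by exact_mod_cast h6
      linarith [htwelve, mul_le_mul_of_nonneg_right hm (mul_pos h0 hr).le,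
        mul_nonneg hω0 (mul_pos hr hr).le]
    · have hcases : (D.card = 2 ∧ F.card = 0) ∨ (D.card = 2 ∧ F.card = 1) ∨
          (D.card = 4 ∧ F.card = 0) := by
        obtain ⟨k, hk⟩ := hev
        omega
      have key : ∀ c : ℝ, c ≤ omegaDF Ω D F →
          (ϑ + r)^2 ≤ 2*((D.card : ℝ) + 2*F.card)*ϑ*r + c*r^2 →
          (ϑ + r) ^ 2 ≤ (((D.card : ℝ) + 2 * F.card) * ϑ / 2
            + omegaDF Ω D F * r / 4) * (4 * r) := by
        intro c hc harith
        linarith [mul_le_mul_of_nonneg_right hc (sq_nonneg r)]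
      rcases hcases with ⟨hd2, hf0⟩ | ⟨hd2, hf1⟩ | ⟨hd4, hf0⟩
      · -- |D| = 2, F = ∅
        obtain ⟨a, b, hab, hDab⟩ := Finset.card_eq_two.mp hd2
        have hF : F = ∅ := Finset.card_eq_zero.mp hf0
        have hcω : 40 - 16*s ≤ omegaDF Ω D F := by
          apply RhoProof.omega_lb Ω hpd
          intro ξ hξ
          set w := RhoProof.wOf Ω D F ξ with hw
          have hsupp : ∀ i ∉ D ∪ F, w i = 0 := by
            intro i hi
            rw [Finset.mem_union] at hi
            push_neg at hi
            exact RhoProof.wOf_not_mem Ω D F ξ hi.1 hi.2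
          rw [RhoProof.quad_eq_sum Ω (D ∪ F) w hsupp]
          have hUnion : D ∪ F = {a, b} := by rw [hF, Finset.union_empty, hDab]
          rw [hUnion]
          simp only [Finset.sum_pair hab]
          have h1a : 1 ≤ w a ^ 2 := hsq1 ξ hξ a (by simp [hDab])
          have h1b : 1 ≤ w b ^ 2 := hsq1 ξ hξ b (by simp [hDab])
          have hba : Ω b a = Ω a b := hsymm.apply a b
          have hoffab := hoff a b hab
          rw [abs_le] at hoffab
          rw [hdiag a, hdiag b, hba]
          have t1 : (0:ℝ) ≤ (8*s - 19 + Ω a b) * (w a + w b)^2 :=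
            mul_nonneg (by linarith) (sq_nonneg _)
          have t2 : (0:ℝ) ≤ (8*s - 19 - Ω a b) * (w a - w b)^2 :=
            mul_nonneg (by linarith) (sq_nonneg _)
          have t3 : (0:ℝ) ≤ (20 - 8*s) * (w a ^ 2 + w b ^ 2 - 2) :=
            mul_nonneg (by linarith) (by linarith)
          linarith [t1, t2, t3]
        refine key _ hcω ?_
        rw [hd2, hf0]
        push_cast
        linarith [RhoProof.even2 s ϑ r hs hs0 hsl h0 h1 hϑr]
      · -- |D| = 2, |F| = 1
        have hk : (D ∪ F).card = 3 := by
          rw [Finset.card_union_of_disjoint hDF, hd2, hf1]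
        have hcω : 20 - 8*s ≤ omegaDF Ω D F := by
          have hl := RhoProof.omega_ge_lambda Ω hpd D F hDF 3 hk hlam30
          rw [hd2] at hl
          push_cast at hl
          linarith [mul_le_mul_of_nonneg_right hlam3 (show (0:ℝ) ≤ 2 by norm_num)]
        refine key _ hcω ?_
        rw [hd2, hf1]
        push_cast
        linarith [RhoProof.even4 s ϑ r hs hs0 hsl h0 h1 hϑr]
      · -- |D| = 4, F = ∅
        have hk : (D ∪ F).card = 4 := by
          rw [Finset.card_union_of_disjoint hDF, hd4, hf0]
        have hcω : 20 - 8*s ≤ omegaDF Ω D F := by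
          have hl := RhoProof.omega_ge_lambda Ω hpd D F hDF 4 hk hlam40
          rw [hd4] at hl
          push_cast at hl
          linarith [mul_le_mul_of_nonneg_right hlam4 (show (0:ℝ) ≤ 4 by norm_num)]
        refine key _ hcω ?_
        rw [hd4, hf0]
        push_cast
        linarith [RhoProof.even4 s ϑ r hs hs0 hsl h0 h1 hϑr]
  · rw [if_neg hev]
    have hdodd : D.card % 2 = 1 := by
      rcases Nat.even_or_odd D.card with h | h
      · exact absurd h hev
      · exact Nat.odd_iff.mp h
    set M := max (Real.sqrt (omegaDF Ω D F * r) - ϑ / Real.sqrt (omegaDF Ω D F * r)) 0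
      with hMdef
    have hM0 : 0 ≤ M := le_max_right _ _
    rw [div_le_iff₀ (by positivity : (0:ℝ) < 4 * r)]
    by_cases h5 : 5 ≤ D.card + 2 * F.card
    · have hm : (5:ℝ) ≤ (D.card : ℝ) + 2 * F.card := by exact_mod_cast h5
      linarith [htwelve, mul_le_mul_of_nonneg_right hm (mul_pos h0 hr).le,
        mul_nonneg (sq_nonneg M) hr.le, mul_pos h0 hr]
    · have hcases : (D.card = 1 ∧ F.card = 0) ∨ (D.card = 1 ∧ F.card = 1) ∨
          (D.card = 3 ∧ F.card = 0) := by omega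
      rcases hcases with ⟨hd1, hf0⟩ | ⟨hd1, hf1⟩ | ⟨hd3, hf0⟩
      · -- |D| = 1, F = ∅
        obtain ⟨a, hDa⟩ := Finset.card_eq_one.mp hd1
        have hF : F = ∅ := Finset.card_eq_zero.mp hf0
        have hcω : 1 ≤ omegaDF Ω D F := by
          apply RhoProof.omega_lb Ω hpd
          intro ξ hξ
          set w := RhoProof.wOf Ω D F ξ with hw
          have hsupp : ∀ i ∉ D ∪ F, w i = 0 := by
            intro i hi
            rw [Finset.mem_union] at hi
            push_neg at hi
            exact RhoProof.wOf_not_mem Ω D F ξ hi.1 hi.2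
          rw [RhoProof.quad_eq_sum Ω (D ∪ F) w hsupp]
          have hUnion : D ∪ F = {a} := by rw [hF, Finset.union_empty, hDa]
          rw [hUnion]
          simp only [Finset.sum_singleton]
          have h1a : 1 ≤ w a ^ 2 := hsq1 ξ hξ a (by simp [hDa])
          rw [hdiag a]
          nlinarith
        have hMlb := RhoProof.max_sqrt_sq_ge ϑ r (omegaDF Ω D F) 1 h0 hr one_pos hcω
          (by linarith)
        rw [← hMdef] at hMlb
        rw [hd1, hf0]
        push_cast
        linarith [RhoProof.odd_m1 ϑ r M h0 hr hMlb]
      · -- |D| = 1, |F| = 1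
        obtain ⟨a, hDa⟩ := Finset.card_eq_one.mp hd1
        obtain ⟨b, hFb⟩ := Finset.card_eq_one.mp hf1
        have hab : a ≠ b := by
          intro h
          subst h
          exact Finset.disjoint_left.mp hDF (by rw [hDa]; exact Finset.mem_singleton_self a)
            (by rw [hFb]; exact Finset.mem_singleton_self a)
        have hcω : 304*s - 744 ≤ omegaDF Ω D F := by
          apply RhoProof.omega_lb Ω hpd
          intro ξ hξ
          set w := RhoProof.wOf Ω D F ξ with hw
          have hsupp : ∀ i ∉ D ∪ F, w i = 0 := by
            intro i hi
            rw [Finset.mem_union] at hi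
            push_neg at hi
            exact RhoProof.wOf_not_mem Ω D F ξ hi.1 hi.2
          rw [RhoProof.quad_eq_sum Ω (D ∪ F) w hsupp]
          have hUnion : D ∪ F = {a, b} := by rw [hDa, hFb]; rfl
          rw [hUnion]
          simp only [Finset.sum_pair hab]
          have h1a : 1 ≤ w a ^ 2 := hsq1 ξ hξ a (by simp [hDa])
          have hba : Ω b a = Ω a b := hsymm.apply a b
          have hoffab := hoff a b hab
          rw [abs_le] at hoffab
          rw [hdiag a, hdiag b, hba]
          have t1 : (0:ℝ) ≤ (w b + Ω a b * w a)^2 := sq_nonneg _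
          have t2 : (0:ℝ) ≤ (8*s - 19 + Ω a b) * (8*s - 19 - Ω a b) :=
            mul_nonneg (by linarith) (by linarith)
          have t3 : (0:ℝ) ≤ (w a ^ 2 - 1) * (1 - Ω a b ^ 2) := by
            refine mul_nonneg (by linarith) ?_
            nlinarith [t2]
          linarith [t1, t2, t3, hs]
        rcases le_or_gt ((ϑ + r)^2) (8*ϑ*r) with hsmall | hbig
        · rw [hd1, hf1]
          push_cast
          linarith [hsmall, mul_nonneg (sq_nonneg M) hr.le]
        · have hϑ5 : 5*ϑ < r := RhoProof.theta_small ϑ r h0 h1 hbig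
          have hchalf : (0.5:ℝ) ≤ 304*s - 744 := by linarith
          have hc0 : (0:ℝ) < 304*s - 744 := by linarith
          have hϑc : ϑ ≤ (304*s - 744) * r := by
            linarith [mul_le_mul_of_nonneg_right hchalf hr.le]
          have hMlb := RhoProof.max_sqrt_sq_ge ϑ r (omegaDF Ω D F) (304*s - 744)
            h0 hr hc0 hcω hϑc
          rw [← hMdef] at hMlb
          rw [hd1, hf1]
          push_cast
          linarith [RhoProof.odd_m3 s ϑ r (304*s - 744) M hs hs0 hsl hsu h0 h1 hϑr
            (by linarith) (by linarith) hMlb]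
      · -- |D| = 3, F = ∅
        have hk : (D ∪ F).card = 3 := by
          rw [Finset.card_union_of_disjoint hDF, hd3, hf0]
        have hcω : 30 - 12*s ≤ omegaDF Ω D F := by
          have hl := RhoProof.omega_ge_lambda Ω hpd D F hDF 3 hk hlam30
          rw [hd3] at hl
          push_cast at hl
          linarith [mul_le_mul_of_nonneg_right hlam3 (show (0:ℝ) ≤ 3 by norm_num)]
        rcases le_or_gt ((ϑ + r)^2) (8*ϑ*r) with hsmall | hbig
        · rw [hd3, hf0]
          push_cast
          linarith [hsmall, mul_nonneg (sq_nonneg M) hr.le]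
        · have hϑ5 : 5*ϑ < r := RhoProof.theta_small ϑ r h0 h1 hbig
          have hchalf : (0.5:ℝ) ≤ 30 - 12*s := by linarith
          have hc0 : (0:ℝ) < 30 - 12*s := by linarith
          have hϑc : ϑ ≤ (30 - 12*s) * r := by
            linarith [mul_le_mul_of_nonneg_right hchalf hr.le]
          have hMlb := RhoProof.max_sqrt_sq_ge ϑ r (omegaDF Ω D F) (30 - 12*s)
            h0 hr hc0 hcω hϑc
          rw [← hMdef] at hMlb
          rw [hd3, hf0]
          push_cast
          linarith [RhoProof.odd_m3 s ϑ r (30 - 12*s) M hs hs0 hsl hsu h0 h1 hϑr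
            (by linarith) (by linarith) hMlb]
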